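/- Let Y1, Y0 be random variables valued in {0,...,J-1} with Y0 ≤ Y1 ≤ Y0+1 almost surely, and let y ∈ {1,...,J-1} with pr(Y1 = y) > 0. Then pr(Y0 = y-1 | Y1 = y) = Σ_{j=0}^{y-1} (pr(Y0 = j) - pr(Y1 = j)) / pr(Y1 = y), and pr(Y0 = ℓ | Y1 = y) = 0 for all ℓ ∉ {y-1, y}. -/

import Mathlib

open MeasureTheory Finset

/-- Probability of an event as a real number. -/
noncomputable def pr {Ω : Type*} [MeasurableSpace Ω] (μ : Measure Ω) (s : Set Ω) : ℝ :=
  (μ s).toReal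

lemma pr_lt_sum {Ω : Type*} [MeasurableSpace Ω] (μ : Measure Ω) [IsProbabilityMeasure μ]
    (f : Ω → ℕ) (hf : Measurable f) (y : ℕ) :
    ∑ j ∈ Finset.range y, pr μ {ω | f ω = j} = pr μ {ω | f ω < y} := by
  have hset : {ω | f ω < y} = ⋃ j ∈ Finset.range y, {ω | f ω = j} := by
    ext ω
    simp only [Set.mem_setOf_eq, Set.mem_iUnion, Finset.mem_range]
    exact ⟨fun h => ⟨f ω, h, rfl⟩, fun ⟨j, hj, e⟩ => e ▸ hj⟩
  have hdisj : ((Finset.range y : Finset ℕ) : Set ℕ).PairwiseDisjoint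
      (fun j => {ω | f ω = j}) := by
    intro i _ j _ hij
    simp only [Function.onFun, Set.disjoint_left]
    intro ω hi hj
    exact hij (hi.symm.trans hj)
  have hmeas : ∀ j, MeasurableSet {ω | f ω = j} := fun j => hf (measurableSet_singleton j)
  have := measure_biUnion_finset (μ := μ) hdisj (fun j _ => hmeas j)
  simp only [pr, hset, this]
  rw [ENNReal.toReal_sum]
  intro j _
  exact measure_ne_top μ _

/-- Identification of `pr(Y0 = y-1 ∣ Y1 = y)` under the monotonic incremental treatment
effect assumption, together with vanishing of `pr(Y0 = ℓ ∣ Y1 = y)` for `ℓ ∉ {y-1, y}`. -/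
theorem pn_level_identification {Ω : Type*} [MeasurableSpace Ω] (μ : Measure Ω)
    [IsProbabilityMeasure μ] (J : ℕ) (Y1 Y0 : Ω → ℕ)
    (hY1m : Measurable Y1) (hY0m : Measurable Y0)
    (hY1 : ∀ ω, Y1 ω < J) (hY0 : ∀ ω, Y0 ω < J)
    (hmono : ∀ᵐ ω ∂μ, Y0 ω ≤ Y1 ω ∧ Y1 ω ≤ Y0 ω + 1)
    (y : ℕ) (hy1 : 1 ≤ y) (hy2 : y ≤ J - 1)
    (hpos : 0 < pr μ {ω | Y1 ω = y}) :
    (pr μ {ω | Y0 ω = y - 1 ∧ Y1 ω = y} / pr μ {ω | Y1 ω = y}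
      = (∑ j ∈ Finset.range y, (pr μ {ω | Y0 ω = j} - pr μ {ω | Y1 ω = j}))
          / pr μ {ω | Y1 ω = y}) ∧
    ∀ l, l ≠ y - 1 → l ≠ y →
      pr μ {ω | Y0 ω = l ∧ Y1 ω = y} / pr μ {ω | Y1 ω = y} = 0 := by
  constructor
  · -- main identity
    have h1 : μ ({ω | Y0 ω < y} ∩ {ω | Y1 ω < y}) + μ ({ω | Y0 ω < y} \ {ω | Y1 ω < y})
        = μ {ω | Y0 ω < y} :=
      measure_inter_add_diff _ (hY1m measurableSet_Iio)
    have h2 : μ ({ω | Y0 ω < y} ∩ {ω | Y1 ω < y}) = μ {ω | Y1 ω < y} := by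
      apply measure_congr
      rw [Filter.eventuallyEq_set]
      filter_upwards [hmono] with ω ⟨ha, hb⟩
      simp only [Set.mem_inter_iff, Set.mem_setOf_eq]
      omega
    have h3 : μ ({ω | Y0 ω < y} \ {ω | Y1 ω < y}) = μ {ω | Y0 ω = y - 1 ∧ Y1 ω = y} := by
      apply measure_congr
      rw [Filter.eventuallyEq_set]
      filter_upwards [hmono] with ω ⟨ha, hb⟩
      simp only [Set.mem_diff, Set.mem_setOf_eq]
      omega
    rw [h2, h3] at h1
    have hfin1 : μ {ω | Y1 ω < y} ≠ ⊤ := measure_ne_top μ _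
    have hfin2 : μ {ω | Y0 ω = y - 1 ∧ Y1 ω = y} ≠ ⊤ := measure_ne_top μ _
    have hr : pr μ {ω | Y1 ω < y} + pr μ {ω | Y0 ω = y - 1 ∧ Y1 ω = y}
        = pr μ {ω | Y0 ω < y} := by
      simp only [pr, ← h1, ENNReal.toReal_add hfin1 hfin2]
    congr 1
    rw [Finset.sum_sub_distrib, pr_lt_sum μ Y0 hY0m y, pr_lt_sum μ Y1 hY1m y]
    linarith
  · intro l hl1 hl2
    have hzero : μ {ω | Y0 ω = l ∧ Y1 ω = y} = 0 := by
      rw [measure_eq_zero_iff_ae_notMem]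
      filter_upwards [hmono] with ω ⟨ha, hb⟩
      simp only [Set.mem_setOf_eq, not_and]
      intro h1 h2
      omega
    simp [pr, hzero]
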